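/- Under the assumptions of the previous statement (R_y = A_I R A_I* with R positive definite and A_I of full column rank p, and q ≥ p+1), let U_n ∈ ℂ^{q×(q−p)} be a matrix whose columns form an orthonormal basis of the orthogonal complement of range(R_y). Then for every index ℓ ∈ I, U_n* a_ℓ = 0, where a_ℓ is the ℓ-th column of A; and if additionally spark(A) ≥ p+1, then for every ℓ ∉ I with a_ℓ in general position (specifically, a_ℓ ∉ range(A_I)), U_n* a_ℓ ≠ 0. Hence I = { ℓ : U_n* a_ℓ = 0 } provided no column outside I lies in range(A_I). -/

import Mathlib

open scoped Classical ComplexOrder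

/-- correctness of MUSIC support recovery.  With
`R_y = A_I R A_I*` (`R` positive definite, `A_I` full column rank `p`,
`q ≥ p+1`), and `U_n` having orthonormal columns spanning the kernel of `R_y`
(the orthogonal complement of `range R_y`): every column `a_ℓ` of `A` with
`ℓ ∈ I` satisfies `U_n* a_ℓ = 0`; every column with `ℓ ∉ I` and
`a_ℓ ∉ range A_I` satisfies `U_n* a_ℓ ≠ 0`; hence `I = {ℓ : U_n* a_ℓ = 0}`
provided no column outside `I` lies in `range A_I`. -/
theorem stmt6 {q L p : ℕ} (hq : p + 1 ≤ q)
    (A : Matrix (Fin q) (Fin L) ℂ)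
    (I : Finset (Fin L)) (hI : I.card = p)
    (AI : Matrix (Fin q) {j // j ∈ I} ℂ) (hAI : AI = A.submatrix id Subtype.val)
    (hrank : AI.rank = p)
    (hspark : ∀ s : Finset (Fin L), s.card = p →
      LinearIndependent ℂ (fun j : s => A.transpose j.1))
    (R : Matrix {j // j ∈ I} {j // j ∈ I} ℂ) (hR : R.PosDef)
    (Ry : Matrix (Fin q) (Fin q) ℂ)
    (hRy : Ry = AI * R * AI.conjTranspose)
    (Un : Matrix (Fin q) (Fin (q - p)) ℂ)
    (hUnOrtho : Un.conjTranspose * Un = 1)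
    (hUnSpan : LinearMap.range Un.mulVecLin = LinearMap.ker Ry.mulVecLin) :
    (∀ ℓ : Fin L, ℓ ∈ I → Un.conjTranspose.mulVec (A.transpose ℓ) = 0) ∧
    (∀ ℓ : Fin L, ℓ ∉ I → A.transpose ℓ ∉ LinearMap.range AI.mulVecLin →
      Un.conjTranspose.mulVec (A.transpose ℓ) ≠ 0) ∧
    ((∀ ℓ : Fin L, ℓ ∉ I → A.transpose ℓ ∉ LinearMap.range AI.mulVecLin) →
      I = Finset.univ.filter
        (fun ℓ => Un.conjTranspose.mulVec (A.transpose ℓ) = 0)) := by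
  have hRherm : R.IsHermitian := hR.1
  -- Step 1: ker Ry ⊆ ker AIᴴ
  have hker : ∀ x : Fin q → ℂ, Ry.mulVec x = 0 → AI.conjTranspose.mulVec x = 0 := by
    intro x hx
    by_contra hy
    have hpos := hR.dotProduct_mulVec_pos hy
    have hzero : dotProduct (star (AI.conjTranspose.mulVec x))
        (R.mulVec (AI.conjTranspose.mulVec x)) = 0 := by
      have h1 : star (AI.conjTranspose.mulVec x) = Matrix.vecMul (star x) AI := by
        rw [Matrix.star_mulVec, Matrix.conjTranspose_conjTranspose]
      rw [h1, ← Matrix.dotProduct_mulVec, Matrix.mulVec_mulVec, Matrix.mulVec_mulVec,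
        ← hRy, hx, dotProduct_zero]
    rw [hzero] at hpos
    exact lt_irrefl 0 hpos
  -- columns of Un are in ker Ry
  have hUncol : ∀ d : Fin (q - p) → ℂ, AI.conjTranspose.mulVec (Un.mulVec d) = 0 := by
    intro d
    apply hker
    have hmem : Un.mulVec d ∈ LinearMap.range Un.mulVecLin := ⟨d, rfl⟩
    rw [hUnSpan] at hmem
    exact hmem
  -- Unᴴ * AI = 0
  have hUnAI : Un.conjTranspose * AI = 0 := by
    have h1 : AI.conjTranspose * Un = 0 := by
      ext i j
      have := congrFun (hUncol (Pi.single j 1)) i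
      rw [Matrix.mulVec_mulVec] at this
      simpa [Matrix.mulVec, dotProduct, Pi.single_apply, mul_ite] using this
    calc Un.conjTranspose * AI = (AI.conjTranspose * Un).conjTranspose := by
          rw [Matrix.conjTranspose_mul, Matrix.conjTranspose_conjTranspose]
      _ = 0 := by rw [h1, Matrix.conjTranspose_zero]
  -- Unᴴ kills everything in range AI
  have hkill : ∀ v, v ∈ LinearMap.range AI.mulVecLin →
      Un.conjTranspose.mulVec v = 0 := by
    rintro v ⟨c, rfl⟩
    rw [Matrix.mulVecLin_apply, Matrix.mulVec_mulVec, hUnAI, Matrix.zero_mulVec]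
  -- Part 1
  have part1 : ∀ ℓ : Fin L, ℓ ∈ I →
      Un.conjTranspose.mulVec (A.transpose ℓ) = 0 := by
    intro ℓ hℓ
    apply hkill
    refine ⟨Pi.single ⟨ℓ, hℓ⟩ 1, ?_⟩
    funext i
    simp [Matrix.mulVecLin_apply, Matrix.mulVec, dotProduct, Pi.single_apply,
      hAI, mul_ite]
  -- Un.mulVecLin is injective
  have hUnretr : ∀ d : Fin (q - p) → ℂ,
      Un.conjTranspose.mulVec (Un.mulVec d) = d := by
    intro d
    rw [Matrix.mulVec_mulVec, hUnOrtho, Matrix.one_mulVec]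
  have hinj : Function.Injective Un.mulVecLin := by
    intro x y hxy
    have := congrArg Un.conjTranspose.mulVec hxy
    simpa [Matrix.mulVecLin_apply, hUnretr] using this
  -- dimensions
  have hS2 : Module.finrank ℂ (LinearMap.range Un.mulVecLin) = q - p := by
    rw [LinearMap.finrank_range_of_inj hinj]
    simp
  have hS1 : Module.finrank ℂ (LinearMap.range AI.mulVecLin) = p := hrank
  have hdisj : Disjoint (LinearMap.range AI.mulVecLin)
      (LinearMap.range Un.mulVecLin) := by
    rw [Submodule.disjoint_def]
    rintro x ⟨c, rfl⟩ ⟨d, hd⟩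
    have hd0 : d = 0 := by
      have := congrArg Un.conjTranspose.mulVec hd
      rw [Matrix.mulVecLin_apply, Matrix.mulVecLin_apply, hUnretr,
        Matrix.mulVec_mulVec, hUnAI, Matrix.zero_mulVec] at this
      exact this
    rw [← hd, hd0, Matrix.mulVecLin_apply, Matrix.mulVec_zero]
  have hsup : LinearMap.range AI.mulVecLin ⊔ LinearMap.range Un.mulVecLin = ⊤ := by
    apply Submodule.eq_top_of_finrank_eq
    have := Submodule.finrank_sup_add_finrank_inf_eq
      (LinearMap.range AI.mulVecLin) (LinearMap.range Un.mulVecLin)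
    rw [hdisj.eq_bot, finrank_bot, add_zero, hS1, hS2] at this
    rw [this]
    simp only [Module.finrank_fintype_fun_eq_card, Fintype.card_fin]
    omega
  -- Part 2
  have part2 : ∀ ℓ : Fin L, ℓ ∉ I → A.transpose ℓ ∉ LinearMap.range AI.mulVecLin →
      Un.conjTranspose.mulVec (A.transpose ℓ) ≠ 0 := by
    intro ℓ hℓ hnr hzero
    apply hnr
    have hmem : A.transpose ℓ ∈ LinearMap.range AI.mulVecLin ⊔
        LinearMap.range Un.mulVecLin := by rw [hsup]; trivial
    obtain ⟨y, hy, z, ⟨d, rfl⟩, hsum⟩ := Submodule.mem_sup.mp hmem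
    have hd0 : d = 0 := by
      have := congrArg Un.conjTranspose.mulVec hsum
      rw [hzero, Matrix.mulVec_add, hkill y hy, zero_add,
        Matrix.mulVecLin_apply, hUnretr] at this
      exact this
    rw [← hsum, hd0]
    simpa using hy
  refine ⟨part1, part2, ?_⟩
  intro hgen
  ext ℓ
  simp only [Finset.mem_filter, Finset.mem_univ, true_and]
  constructor
  · exact part1 ℓ
  · intro hz
    by_contra hℓ
    exact part2 ℓ hℓ (hgen ℓ hℓ) hz
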